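/- Let ν > 1 and let A ∈ ℝ^{5×5} be the matrix with rows (1,0,0,1,0), (0,1,0,ν,0), (0,0,1,0,0), (−ν,1,0,0,0), (0,0,0,0,1), partitioned with k = 3 so that A11 = I₃ (the 3×3 identity), A12 = [[1,0],[ν,0],[0,0]], A21 = [[−ν,1,0],[0,0,0]], A22 = [[0,0],[0,1]]. Then: (a) σ_3(A) = σ_4(A) = 1, so σ_3(A) ≤ σ_3(A11) = 1; (b) the Schur complement S(A11) = A22 − A21·A11⁻¹·A12 satisfies ‖S(A11)‖₂ = 1 = σ_4(A); (c) ‖A21A11⁻¹‖_max = ‖A11⁻¹A12‖_max = ν; and yet (d) the 3×3 submatrix A([2,3,4],[1,3,4]) satisfies vol(A([2,3,4],[1,3,4])) = ν² = ν²·vol(A11). In particular, A11 is not a γ-local maximum volume 3×3 submatrix of A for any γ < ν². -/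

import Mathlib

open Matrix Module

set_option linter.unusedSectionVars false
set_option maxHeartbeats 1000000


/-- The spectral norm (`‖·‖₂`, largest singular value) of a real matrix. -/
noncomputable def specNorm {m n : Type*} [Fintype m] [Fintype n] [DecidableEq n]
    (A : Matrix m n ℝ) : ℝ :=
  ‖LinearMap.toContinuousLinearMap (Matrix.toEuclideanLin A)‖

/-- `sval A j` is the `j`-th largest singular value of `A` (1-indexed), characterized as the
distance, in the spectral norm, from `A` to the set of matrices of rank `< j`. -/
noncomputable def sval {m n : Type*} [Fintype m] [Fintype n] [DecidableEq n]
    (A : Matrix m n ℝ) (j : ℕ) : ℝ :=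
  sInf {x : ℝ | ∃ B : Matrix m n ℝ, B.rank < j ∧ x = specNorm (A - B)}

/-- The volume of a matrix: the product of its singular values. -/
noncomputable def vol {m n : Type*} [Fintype m] [Fintype n] [DecidableEq n]
    (A : Matrix m n ℝ) : ℝ :=
  ∏ j ∈ Finset.Icc 1 (min (Fintype.card m) (Fintype.card n)), sval A j

/-- `DiffOne b r` : `r` is an injective selection of indices whose image (index set)
differs from the index set selected by `b` in at most one element. -/
def DiffOne {ι α : Type*} [Fintype ι] [DecidableEq α] (b r : ι → α) : Prop :=
  Function.Injective r ∧ (Finset.univ.image r \ Finset.univ.image b).card ≤ 1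

/-- The maximum absolute value of the entries of a matrix. -/
noncomputable def maxAbs {m n : Type*} [Fintype m] [Fintype n] (A : Matrix m n ℝ) : ℝ :=
  ⨆ i, ⨆ j, |A i j|

noncomputable def eA12 (ν : ℝ) : Matrix (Fin 3) (Fin 2) ℝ := !![1, 0; ν, 0; 0, 0]

noncomputable def eA21 (ν : ℝ) : Matrix (Fin 2) (Fin 3) ℝ := !![-ν, 1, 0; 0, 0, 0]

noncomputable def eA22 : Matrix (Fin 2) (Fin 2) ℝ := !![0, 0; 0, 1]

/-- The 5×5 example with rows (1,0,0,1,0), (0,1,0,ν,0), (0,0,1,0,0), (−ν,1,0,0,0),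
(0,0,0,0,1), in 3/2 block form; A11 = I₃. -/
noncomputable def eA (ν : ℝ) : Matrix (Fin 3 ⊕ Fin 2) (Fin 3 ⊕ Fin 2) ℝ :=
  Matrix.fromBlocks 1 (eA12 ν) (eA21 ν) eA22

section Machinery

variable {m n : Type*} [Fintype m] [Fintype n] [DecidableEq n]

lemma toEL_apply (M : Matrix m n ℝ) (x : EuclideanSpace ℝ n) (i : m) :
    Matrix.toEuclideanLin M x i = ∑ j, M i j * x j := rfl

lemma enorm_eq (x : EuclideanSpace ℝ m) : ‖x‖ = Real.sqrt (∑ i, x i ^ 2) := by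
  simp [EuclideanSpace.norm_eq, Real.norm_eq_abs, sq_abs]

lemma specNorm_le_of_sq (A : Matrix m n ℝ) {c : ℝ} (hc : 0 ≤ c)
    (h : ∀ x : EuclideanSpace ℝ n, ∑ i, (Matrix.toEuclideanLin A x i) ^ 2 ≤ c ^ 2 * ∑ j, x j ^ 2) :
    specNorm A ≤ c := by
  apply ContinuousLinearMap.opNorm_le_bound _ hc
  intro x
  have hh := h x
  rw [LinearMap.coe_toContinuousLinearMap']
  rw [enorm_eq, enorm_eq]
  calc Real.sqrt (∑ i, (Matrix.toEuclideanLin A x i) ^ 2)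
      ≤ Real.sqrt (c ^ 2 * ∑ j, x j ^ 2) := Real.sqrt_le_sqrt hh
    _ = c * Real.sqrt (∑ j, x j ^ 2) := by
        rw [Real.sqrt_mul (sq_nonneg c), Real.sqrt_sq hc]

lemma le_specNorm_of_sq (A : Matrix m n ℝ) {c : ℝ} (hc : 0 ≤ c) (x : EuclideanSpace ℝ n)
    (hx : 0 < ∑ j, x j ^ 2)
    (h : c ^ 2 * ∑ j, x j ^ 2 ≤ ∑ i, (Matrix.toEuclideanLin A x i) ^ 2) :
    c ≤ specNorm A := by
  have hxn : 0 < ‖x‖ := by rw [enorm_eq]; positivity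
  have h1 : c * ‖x‖ ≤ ‖Matrix.toEuclideanLin A x‖ := by
    rw [enorm_eq, enorm_eq]
    calc c * Real.sqrt (∑ j, x j ^ 2) = Real.sqrt (c ^ 2 * ∑ j, x j ^ 2) := by
          rw [Real.sqrt_mul (sq_nonneg c), Real.sqrt_sq hc]
      _ ≤ _ := Real.sqrt_le_sqrt h
  have h2 : ‖Matrix.toEuclideanLin A x‖ ≤ specNorm A * ‖x‖ := by
    have := (LinearMap.toContinuousLinearMap (Matrix.toEuclideanLin A)).le_opNorm x
    simpa [specNorm] using this
  exact le_of_mul_le_mul_right (h1.trans h2) hxn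

lemma svalSet_bddBelow (A : Matrix m n ℝ) (j : ℕ) :
    BddBelow {x : ℝ | ∃ B : Matrix m n ℝ, B.rank < j ∧ x = specNorm (A - B)} :=
  ⟨0, fun _ ⟨_, _, hx⟩ => hx ▸ norm_nonneg _⟩

lemma svalSet_nonempty (A : Matrix m n ℝ) {j : ℕ} (hj : 0 < j) :
    {x : ℝ | ∃ B : Matrix m n ℝ, B.rank < j ∧ x = specNorm (A - B)}.Nonempty :=
  ⟨specNorm A, 0, by simpa [Matrix.rank_zero] using hj, by simp⟩

lemma sval_le (A : Matrix m n ℝ) {j : ℕ} (B : Matrix m n ℝ) (hB : B.rank < j) :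
    sval A j ≤ specNorm (A - B) :=
  csInf_le (svalSet_bddBelow A j) ⟨B, hB, rfl⟩

lemma le_sval (A : Matrix m n ℝ) {j : ℕ} (hj : 0 < j) {c : ℝ}
    (h : ∀ B : Matrix m n ℝ, B.rank < j → c ≤ specNorm (A - B)) : c ≤ sval A j :=
  le_csInf (svalSet_nonempty A hj) (fun _ ⟨B, hB, hx⟩ => hx ▸ h B hB)

lemma sval_anti (A : Matrix m n ℝ) {i j : ℕ} (hi : 0 < i) (hij : i ≤ j) :
    sval A j ≤ sval A i :=
  csInf_le_csInf (svalSet_bddBelow A j) (svalSet_nonempty A hi)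
    (fun _ ⟨B, hB, hx⟩ => ⟨B, lt_of_lt_of_le hB hij, hx⟩)

lemma rank_eq_finrank_range_toEL {m : Type*} [Fintype m] (B : Matrix m n ℝ) :
    B.rank = finrank ℝ (LinearMap.range (Matrix.toEuclideanLin B)) := by
  rw [Matrix.toEuclideanLin_eq_toLin]
  exact Matrix.rank_eq_finrank_range_toLin B _ _

lemma le_sval_of_subspace (A : Matrix m n ℝ) {j : ℕ} (hj : 0 < j) {c : ℝ} (hc : 0 ≤ c)
    (V : Submodule ℝ (EuclideanSpace ℝ n)) (hdim : j ≤ finrank ℝ V)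
    (hV : ∀ x ∈ V, c ^ 2 * ∑ k, x k ^ 2 ≤ ∑ i, (Matrix.toEuclideanLin A x i) ^ 2) :
    c ≤ sval A j := by
  apply le_sval A hj
  intro B hB
  set f := Matrix.toEuclideanLin B with hf
  have hrn : finrank ℝ (LinearMap.range f) + finrank ℝ (LinearMap.ker f) =
      Fintype.card n := by
    rw [LinearMap.finrank_range_add_finrank_ker f, finrank_euclideanSpace]
  have hrank : finrank ℝ (LinearMap.range f) < j := by
    rw [hf, ← rank_eq_finrank_range_toEL]; exact hB
  have hne : V ⊓ LinearMap.ker f ≠ ⊥ := by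
    intro hbot
    have h1 := Submodule.finrank_sup_add_finrank_inf_eq V (LinearMap.ker f)
    rw [hbot, finrank_bot] at h1
    have h2 : finrank ℝ ((V ⊔ LinearMap.ker f : Submodule ℝ (EuclideanSpace ℝ n)) :
        Submodule ℝ (EuclideanSpace ℝ n)) ≤ Fintype.card n := by
      have := Submodule.finrank_le (V ⊔ LinearMap.ker f : Submodule ℝ (EuclideanSpace ℝ n))
      rwa [finrank_euclideanSpace] at this
    omega
  obtain ⟨x, hxm, hx0⟩ := Submodule.exists_mem_ne_zero_of_ne_bot hne
  have hxV : x ∈ V := hxm.1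
  have hxK : f x = 0 := hxm.2
  have hsum : 0 < ∑ k, x k ^ 2 := by
    have hex : ∃ k, x k ≠ 0 := by
      by_contra hcon
      push_neg at hcon
      exact hx0 (WithLp.ofLp_injective (p := 2) (funext hcon))
    obtain ⟨k0, hk0⟩ := hex
    exact Finset.sum_pos' (fun k _ => sq_nonneg _) ⟨k0, Finset.mem_univ _, by positivity⟩
  apply le_specNorm_of_sq (A - B) hc x hsum
  have key : Matrix.toEuclideanLin (A - B) x = Matrix.toEuclideanLin A x := by
    rw [map_sub, LinearMap.sub_apply, ← hf, hxK, sub_zero]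
  rw [key]
  exact hV x hxV

lemma le_finrank_ker_row (W : Matrix (Fin 1) n ℝ) :
    Fintype.card n ≤ finrank ℝ (LinearMap.ker (Matrix.toEuclideanLin W)) + 1 := by
  have hrn := LinearMap.finrank_range_add_finrank_ker (Matrix.toEuclideanLin W)
  rw [finrank_euclideanSpace] at hrn
  have h1 : finrank ℝ (LinearMap.range (Matrix.toEuclideanLin W)) ≤ 1 := by
    rw [← rank_eq_finrank_range_toEL]
    simpa using W.rank_le_card_height
  omega

end Machinery

section EAfacts

noncomputable def Cm (ν : ℝ) : Matrix (Fin 3 ⊕ Fin 2) (Fin 2) ℝ :=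
  Matrix.of fun i k =>
    Sum.elim (fun i' => !![1,0;0,1;0,0] i' k) (fun i' => !![-ν,1;0,0] i' k) i

noncomputable def Dm (ν : ℝ) : Matrix (Fin 2) (Fin 3 ⊕ Fin 2) ℝ :=
  Matrix.of fun k j =>
    Sum.elim (fun j' => !![1,0,0;0,1,0] k j') (fun j' => !![(1:ℝ),0;ν,0] k j') j

lemma rank_CD (ν : ℝ) : (Cm ν * Dm ν).rank ≤ 2 := by
  have h1 := Matrix.rank_mul_le_left (Cm ν) (Dm ν)
  have h2 := (Cm ν).rank_le_card_width
  simpa using h1.trans h2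

lemma eA_sub_CD (ν : ℝ) : eA ν - Cm ν * Dm ν =
    Matrix.of (fun i j => if i = Sum.inl 2 ∧ j = Sum.inl 2 then (1:ℝ)
      else if i = Sum.inr 1 ∧ j = Sum.inr 1 then 1 else 0) := by
  ext i j
  rcases i with i | i <;> rcases j with j | j <;> fin_cases i <;> fin_cases j <;>
    simp [eA, eA12, eA21, eA22, Cm, Dm, Matrix.mul_apply, Fin.sum_univ_two,
      Matrix.one_apply, Matrix.vecHead, Matrix.vecTail]

lemma specNorm_E2_le (ν : ℝ) : specNorm (eA ν - Cm ν * Dm ν) ≤ 1 := by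
  rw [eA_sub_CD]
  apply specNorm_le_of_sq _ zero_le_one
  intro x
  simp only [toEL_apply]
  simp [Fintype.sum_sum_type, Fin.sum_univ_three, Fin.sum_univ_two]
  nlinarith [sq_nonneg (x (Sum.inl 0)), sq_nonneg (x (Sum.inl 1)), sq_nonneg (x (Sum.inr 0))]

lemma sval_eA_four_ge (ν : ℝ) : 1 ≤ sval (eA ν) 4 := by
  set W : Matrix (Fin 1) (Fin 3 ⊕ Fin 2) ℝ :=
    Matrix.of (fun _ j => Sum.elim (fun j' => ![(1:ℝ), ν, 0] j') (fun j' => ![(-1:ℝ), 0] j') j)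
    with hW
  apply le_sval_of_subspace (eA ν) (by norm_num) zero_le_one
    (LinearMap.ker (Matrix.toEuclideanLin W))
  · have := le_finrank_ker_row W
    simp only [Fintype.card_sum, Fintype.card_fin] at this
    omega
  · intro x hx
    have h0 : Matrix.toEuclideanLin W x 0 = 0 := by
      rw [LinearMap.mem_ker.mp hx]; rfl
    rw [toEL_apply] at h0
    rw [Fintype.sum_sum_type, Fin.sum_univ_three, Fin.sum_univ_two] at h0
    simp only [hW, Matrix.of_apply, Sum.elim_inl, Sum.elim_inr] at h0
    norm_num at h0
    simp only [toEL_apply]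
    simp [eA, eA12, eA21, eA22, Fintype.sum_sum_type, Fin.sum_univ_three, Fin.sum_univ_two,
      Matrix.one_apply]
    set a := x (Sum.inl 0); set b := x (Sum.inl 1); set c := x (Sum.inl 2)
    set d := x (Sum.inr 0); set e := x (Sum.inr 1)
    have hd : d = a + ν * b := by simp at h0; linarith
    rw [hd]
    nlinarith [sq_nonneg (a + ν * b), sq_nonneg a, sq_nonneg b, sq_nonneg (ν * b)]

lemma sval_eA3 (ν : ℝ) : sval (eA ν) 3 = 1 ∧ sval (eA ν) 4 = 1 := by
  have h43 : sval (eA ν) 4 ≤ sval (eA ν) 3 := sval_anti _ (by norm_num) (by norm_num)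
  have hle : sval (eA ν) 3 ≤ 1 :=
    (sval_le (eA ν) (Cm ν * Dm ν) (lt_of_le_of_lt (rank_CD ν) (by norm_num))).trans
      (specNorm_E2_le ν)
  have hge := sval_eA_four_ge ν
  constructor <;> linarith

end EAfacts
section Concrete

lemma finrank_top_euc (k : Type*) [Fintype k] :
    finrank ℝ (⊤ : Submodule ℝ (EuclideanSpace ℝ k)) = Fintype.card k := by
  rw [finrank_top, finrank_euclideanSpace]

lemma sval_one3 (j : ℕ) (hj : 0 < j) (hj3 : j ≤ 3) :
    sval (1 : Matrix (Fin 3) (Fin 3) ℝ) j = 1 := by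
  have hge : (1:ℝ) ≤ sval (1 : Matrix (Fin 3) (Fin 3) ℝ) j := by
    apply le_sval_of_subspace _ hj zero_le_one (⊤ : Submodule ℝ (EuclideanSpace ℝ (Fin 3)))
    · rw [finrank_top_euc]; simpa using hj3
    · intro x _
      simp [toEL_apply, Matrix.one_apply, Fin.sum_univ_three]
  have hle : sval (1 : Matrix (Fin 3) (Fin 3) ℝ) j ≤ 1 := by
    refine (sval_anti _ (by norm_num) hj).trans ?_
    refine (sval_le _ 0 (by simpa [Matrix.rank_zero] using Nat.one_pos)).trans ?_
    rw [sub_zero]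
    apply specNorm_le_of_sq _ zero_le_one
    intro x
    simp [toEL_apply, Matrix.one_apply, Fin.sum_univ_three]
  linarith

noncomputable def Nm (ν : ℝ) : Matrix (Fin 3) (Fin 3) ℝ := !![0,0,ν;0,1,0;-ν,0,0]

lemma sval_Nm1 (ν : ℝ) (hν : 1 < ν) : sval (Nm ν) 1 = ν ∧ sval (Nm ν) 2 = ν ∧
    sval (Nm ν) 3 = 1 := by
  have hν0 : (0:ℝ) ≤ ν := by linarith
  have hle1 : sval (Nm ν) 1 ≤ ν := by
    refine (sval_le _ 0 (by simpa [Matrix.rank_zero] using Nat.one_pos)).trans ?_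
    rw [sub_zero]
    apply specNorm_le_of_sq _ hν0
    intro x
    simp [toEL_apply, Nm, Fin.sum_univ_three, Matrix.vecHead, Matrix.vecTail]
    have hν2 : (1:ℝ) ≤ ν^2 := by nlinarith
    nlinarith [mul_le_mul_of_nonneg_right hν2 (sq_nonneg (x 1))]
  have hge2 : ν ≤ sval (Nm ν) 2 := by
    set W : Matrix (Fin 1) (Fin 3) ℝ := !![0,1,0] with hW
    apply le_sval_of_subspace (Nm ν) (by norm_num) hν0 (LinearMap.ker (Matrix.toEuclideanLin W))
    · have := le_finrank_ker_row W
      simp only [Fintype.card_fin] at this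
      omega
    · intro x hx
      have h0 : Matrix.toEuclideanLin W x 0 = 0 := by
        rw [LinearMap.mem_ker.mp hx]; rfl
      rw [toEL_apply] at h0
      simp [hW, Fin.sum_univ_three] at h0
      simp [toEL_apply, Nm, Fin.sum_univ_three, h0, Matrix.vecHead, Matrix.vecTail]
      ring_nf
      nlinarith [sq_nonneg (x 0), sq_nonneg (x 2)]
  have h21 : sval (Nm ν) 2 ≤ sval (Nm ν) 1 := sval_anti _ (by norm_num) (by norm_num)
  have hge3 : (1:ℝ) ≤ sval (Nm ν) 3 := by
    apply le_sval_of_subspace _ (by norm_num) zero_le_one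
      (⊤ : Submodule ℝ (EuclideanSpace ℝ (Fin 3)))
    · rw [finrank_top_euc]; simp
    · intro x _
      simp [toEL_apply, Nm, Fin.sum_univ_three, Matrix.vecHead, Matrix.vecTail]
      have hν2 : (1:ℝ) ≤ ν^2 := by nlinarith
      nlinarith [mul_le_mul_of_nonneg_right hν2 (sq_nonneg (x 0)),
        mul_le_mul_of_nonneg_right hν2 (sq_nonneg (x 2))]
  have hle3 : sval (Nm ν) 3 ≤ 1 := by
    have hrk : (!![(1:ℝ),0;0,0;0,1] * !![(0:ℝ),0,ν;-ν,0,0]).rank < 3 := by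
      have h1 := Matrix.rank_mul_le_left !![(1:ℝ),0;0,0;0,1] !![(0:ℝ),0,ν;-ν,0,0]
      have h2 := Matrix.rank_le_card_width !![(1:ℝ),0;0,0;0,1]
      simp at h2
      omega
    refine (sval_le _ _ hrk).trans ?_
    have heq : Nm ν - !![(1:ℝ),0;0,0;0,1] * !![(0:ℝ),0,ν;-ν,0,0] = !![0,0,0;0,1,0;0,0,0] := by
      ext i j
      fin_cases i <;> fin_cases j <;>
        simp [Nm, Matrix.mul_apply, Fin.sum_univ_two, Fin.sum_univ_three, Matrix.vecHead, Matrix.vecTail]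
    rw [heq]
    apply specNorm_le_of_sq _ zero_le_one
    intro x
    simp [toEL_apply, Fin.sum_univ_three]
    nlinarith [sq_nonneg (x 0), sq_nonneg (x 2)]
  have h32 : sval (Nm ν) 3 ≤ sval (Nm ν) 2 := sval_anti _ (by norm_num) (by norm_num)
  refine ⟨le_antisymm hle1 (hge2.trans h21), le_antisymm (h21.trans hle1) hge2, ?_⟩
  linarith

lemma vol_fin3 (A : Matrix (Fin 3) (Fin 3) ℝ) :
    vol A = sval A 1 * sval A 2 * sval A 3 := by
  rw [vol]
  rw [show (min (Fintype.card (Fin 3)) (Fintype.card (Fin 3))) = 3 by simp]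
  rw [show (Finset.Icc 1 3 : Finset ℕ) = {1,2,3} by rfl]
  rw [Finset.prod_insert (by decide), Finset.prod_insert (by decide), Finset.prod_singleton,
    mul_assoc]

lemma submatrix_eq_Nm (ν : ℝ) :
    (eA ν).submatrix ![Sum.inl 1, Sum.inl 2, Sum.inr 0] ![Sum.inl 0, Sum.inl 2, Sum.inr 0]
      = Nm ν := by
  ext i j
  fin_cases i <;> fin_cases j <;>
    simp [eA, eA12, eA21, eA22, Nm, Matrix.one_apply, Matrix.vecHead, Matrix.vecTail]

lemma schur_eq : ∀ ν : ℝ, eA22 - eA21 ν * (1 : Matrix (Fin 3) (Fin 3) ℝ)⁻¹ * eA12 ν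
    = !![0,0;0,1] := by
  intro ν
  rw [inv_one, Matrix.mul_one]
  ext i j
  fin_cases i <;> fin_cases j <;>
    simp [eA12, eA21, eA22, Matrix.mul_apply, Fin.sum_univ_three]

lemma specNorm_diag01 : specNorm (!![0,0;0,1] : Matrix (Fin 2) (Fin 2) ℝ) = 1 := by
  have hle : specNorm (!![0,0;0,1] : Matrix (Fin 2) (Fin 2) ℝ) ≤ 1 := by
    apply specNorm_le_of_sq _ zero_le_one
    intro x
    simp [toEL_apply, Fin.sum_univ_two]
    nlinarith [sq_nonneg (x 0)]
  have hge : (1:ℝ) ≤ specNorm (!![0,0;0,1] : Matrix (Fin 2) (Fin 2) ℝ) := by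
    apply le_specNorm_of_sq _ zero_le_one ((WithLp.equiv 2 (Fin 2 → ℝ)).symm ![0,1])
    · simp [Fin.sum_univ_two, WithLp.equiv_symm_apply, PiLp.toLp_apply]
    · simp [toEL_apply, Fin.sum_univ_two, WithLp.equiv_symm_apply, PiLp.toLp_apply]
  linarith

end Concrete
section MaxAbs

lemma maxAbs_le {m n : Type*} [Fintype m] [Fintype n] [Nonempty m] [Nonempty n]
    (A : Matrix m n ℝ) {c : ℝ} (h : ∀ i j, |A i j| ≤ c) : maxAbs A ≤ c :=
  ciSup_le fun i => ciSup_le fun j => h i j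

lemma le_maxAbs {m n : Type*} [Fintype m] [Fintype n] (A : Matrix m n ℝ) (i : m) (j : n) :
    |A i j| ≤ maxAbs A := by
  have h1 : |A i j| ≤ ⨆ j', |A i j'| :=
    le_ciSup (f := fun j' => |A i j'|) (Set.Finite.bddAbove (Set.finite_range _)) j
  have h2 : (⨆ j', |A i j'|) ≤ maxAbs A :=
    le_ciSup (f := fun i' => ⨆ j', |A i' j'|) (Set.Finite.bddAbove (Set.finite_range _)) i
  exact h1.trans h2

lemma maxAbs_eA21 (ν : ℝ) (hν : 1 < ν) :
    maxAbs (eA21 ν * (1 : Matrix (Fin 3) (Fin 3) ℝ)⁻¹) = ν := by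
  rw [inv_one, Matrix.mul_one]
  apply le_antisymm
  · apply maxAbs_le
    intro i j
    fin_cases i <;> fin_cases j <;>
      simp [eA21, Matrix.vecHead, Matrix.vecTail] <;>
      first
        | linarith
        | (rw [abs_le]; constructor <;> linarith)
  · have h := le_maxAbs (eA21 ν) 0 0
    simp [eA21] at h
    rwa [abs_of_pos (by linarith : (0:ℝ) < ν)] at h

lemma maxAbs_eA12 (ν : ℝ) (hν : 1 < ν) :
    maxAbs ((1 : Matrix (Fin 3) (Fin 3) ℝ)⁻¹ * eA12 ν) = ν := by
  rw [inv_one, Matrix.one_mul]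
  apply le_antisymm
  · apply maxAbs_le
    intro i j
    fin_cases i <;> fin_cases j <;>
      simp [eA12, Matrix.vecHead, Matrix.vecTail] <;>
      first
        | linarith
        | (rw [abs_le]; constructor <;> linarith)
  · have h := le_maxAbs (eA12 ν) 1 0
    simp [eA12, Matrix.vecHead, Matrix.vecTail] at h
    rwa [abs_of_pos (by linarith : (0:ℝ) < ν)] at h

end MaxAbs

theorem statement_18 (ν : ℝ) (hν : 1 < ν) :
    (sval (eA ν) 3 = 1 ∧ sval (eA ν) 4 = 1 ∧
      sval (1 : Matrix (Fin 3) (Fin 3) ℝ) 3 = 1 ∧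
      sval (eA ν) 3 ≤ sval (1 : Matrix (Fin 3) (Fin 3) ℝ) 3) ∧
    (specNorm (eA22 - eA21 ν * (1 : Matrix (Fin 3) (Fin 3) ℝ)⁻¹ * eA12 ν) = 1 ∧
      specNorm (eA22 - eA21 ν * (1 : Matrix (Fin 3) (Fin 3) ℝ)⁻¹ * eA12 ν) =
        sval (eA ν) 4) ∧
    (maxAbs (eA21 ν * (1 : Matrix (Fin 3) (Fin 3) ℝ)⁻¹) = ν ∧
      maxAbs ((1 : Matrix (Fin 3) (Fin 3) ℝ)⁻¹ * eA12 ν) = ν) ∧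
    (vol ((eA ν).submatrix ![Sum.inl 1, Sum.inl 2, Sum.inr 0]
        ![Sum.inl 0, Sum.inl 2, Sum.inr 0]) = ν ^ 2 ∧
      ν ^ 2 = ν ^ 2 * vol (1 : Matrix (Fin 3) (Fin 3) ℝ)) ∧
    (∀ γ : ℝ, 1 ≤ γ → γ < ν ^ 2 →
      ¬ (∀ (r c : Fin 3 → Fin 3 ⊕ Fin 2), DiffOne Sum.inl r → DiffOne Sum.inl c →
        vol ((eA ν).submatrix r c) ≤ γ * vol (1 : Matrix (Fin 3) (Fin 3) ℝ))) := by
  obtain ⟨h3, h4⟩ := sval_eA3 ν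
  have hone : ∀ j : ℕ, 0 < j → j ≤ 3 → sval (1 : Matrix (Fin 3) (Fin 3) ℝ) j = 1 :=
    sval_one3
  have hone3 := hone 3 (by norm_num) (by norm_num)
  obtain ⟨hN1, hN2, hN3⟩ := sval_Nm1 ν hν
  have hvol1 : vol (1 : Matrix (Fin 3) (Fin 3) ℝ) = 1 := by
    rw [vol_fin3, hone 1 (by norm_num) (by norm_num), hone 2 (by norm_num) (by norm_num),
      hone3]
    ring
  have hvolN : vol ((eA ν).submatrix ![Sum.inl 1, Sum.inl 2, Sum.inr 0]
      ![Sum.inl 0, Sum.inl 2, Sum.inr 0]) = ν ^ 2 := by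
    rw [submatrix_eq_Nm, vol_fin3, hN1, hN2, hN3]
    ring
  refine ⟨⟨h3, h4, hone3, by rw [h3, hone3]⟩, ?_, ⟨maxAbs_eA21 ν hν, maxAbs_eA12 ν hν⟩,
    ⟨hvolN, by rw [hvol1]; ring⟩, ?_⟩
  · rw [schur_eq ν, specNorm_diag01, h4]
    exact ⟨rfl, rfl⟩
  · intro γ hγ1 hγν2 h
    have hd1 : DiffOne (Sum.inl : Fin 3 → Fin 3 ⊕ Fin 2) ![Sum.inl 1, Sum.inl 2, Sum.inr 0] := by
      constructor
      · decide
      · decide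
    have hd2 : DiffOne (Sum.inl : Fin 3 → Fin 3 ⊕ Fin 2) ![Sum.inl 0, Sum.inl 2, Sum.inr 0] := by
      constructor
      · decide
      · decide
    have := h _ _ hd1 hd2
    rw [hvolN, hvol1] at this
    nlinarith
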